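/- Let H be a Hopf k-algebra, (M, Δ_M) a right H-comodule, and (B, θ_B) a left H-contramodule. Then the map θ_diag : Hom_k(H, Hom_k(M,B)) → Hom_k(M,B) defined by θ_diag(Φ)(m) = θ_B(h ↦ Φ(m₍₁₎h)(m₍₀₎)) makes (Hom_k(M,B), θ_diag) a left H-contramodule (the diagonal contra-action). -/

import Mathlib

/-!
STATEMENT 6: Let H be a Hopf k-algebra, (M, Δ_M) a right H-comodule, and (B, θ_B) a left
H-contramodule. Then θ_diag(Φ)(m) = θ_B(h ↦ Φ(m₍₁₎h)(m₍₀₎)) makes (Hom_k(M,B), θ_diag)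
a left H-contramodule (the diagonal contra-action).
-/

open TensorProduct LinearMap

noncomputable section

def IsContramodule (k : Type*) [Field k]
    (C : Type*) [AddCommMonoid C] [Module k C] [Coalgebra k C]
    {B : Type*} [AddCommGroup B] [Module k B]
    (θ : (C →ₗ[k] B) →ₗ[k] B) : Prop :=
  (∀ Φ : C →ₗ[k] (C →ₗ[k] B),
      θ (θ ∘ₗ Φ) = θ ((TensorProduct.lift Φ.flip) ∘ₗ Coalgebra.comul)) ∧
  (∀ b : B, θ ((LinearMap.toSpanSingleton k B b) ∘ₗ Coalgebra.counit) = b)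

def IsComodule (k : Type*) [Field k]
    (C : Type*) [AddCommMonoid C] [Module k C] [Coalgebra k C]
    {M : Type*} [AddCommGroup M] [Module k M]
    (ρ : M →ₗ[k] M ⊗[k] C) : Prop :=
  ((TensorProduct.assoc k M C C).toLinearMap ∘ₗ (TensorProduct.map ρ LinearMap.id) ∘ₗ ρ
      = (TensorProduct.map LinearMap.id Coalgebra.comul) ∘ₗ ρ) ∧
  ((TensorProduct.rid k M).toLinearMap ∘ₗ
      (TensorProduct.map LinearMap.id Coalgebra.counit) ∘ₗ ρ = LinearMap.id)

/-- The diagonal contra-action on `Hom_k(M,B)`: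
`θ_diag(Φ)(m) = θ_B(h ↦ Φ(m₍₁₎h)(m₍₀₎))`, bundled as a linear map in `Φ`. -/
def diagContra (k : Type*) [Field k]
    (H : Type*) [Semiring H] [HopfAlgebra k H]
    {M : Type*} [AddCommGroup M] [Module k M]
    {B : Type*} [AddCommGroup B] [Module k B]
    (ρ : M →ₗ[k] M ⊗[k] H) (θB : (H →ₗ[k] B) →ₗ[k] B) :
    (H →ₗ[k] (M →ₗ[k] B)) →ₗ[k] (M →ₗ[k] B) :=
  (LinearMap.llcomp k M (H →ₗ[k] B) B θB) ∘ₗ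
  (LinearMap.lcomp k (H →ₗ[k] B) ρ) ∘ₗ
  (TensorProduct.uncurry (RingHom.id k) M H (H →ₗ[k] B)) ∘ₗ
  (LinearMap.lflip : (H →ₗ[k] (M →ₗ[k] (H →ₗ[k] B))) ≃ₗ[k] (M →ₗ[k] (H →ₗ[k] (H →ₗ[k] B)))).toLinearMap ∘ₗ
  (LinearMap.llcomp k H (H →ₗ[k] (M →ₗ[k] B)) (M →ₗ[k] (H →ₗ[k] B)) (LinearMap.lflip : (H →ₗ[k] (M →ₗ[k] B)) ≃ₗ[k] (M →ₗ[k] (H →ₗ[k] B))).toLinearMap) ∘ₗ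
  (TensorProduct.lcurry (RingHom.id k) H H (M →ₗ[k] B)) ∘ₗ
  (LinearMap.lcomp k (M →ₗ[k] B) (LinearMap.mul' k H))

section Aux
variable {k : Type*} [Field k] {H : Type*} [Semiring H] [HopfAlgebra k H]
  {M : Type*} [AddCommGroup M] [Module k M]
  {B : Type*} [AddCommGroup B] [Module k B]

/-- The core piece of `diagContra`: `DmapAux Φ (m₀ ⊗ h₁) h = Φ (h₁ h) m₀`. -/
def DmapAux : (H →ₗ[k] (M →ₗ[k] B)) →ₗ[k] (M ⊗[k] H →ₗ[k] (H →ₗ[k] B)) :=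
  (TensorProduct.uncurry (RingHom.id k) M H (H →ₗ[k] B)) ∘ₗ
  (LinearMap.lflip : (H →ₗ[k] (M →ₗ[k] (H →ₗ[k] B))) ≃ₗ[k] (M →ₗ[k] (H →ₗ[k] (H →ₗ[k] B)))).toLinearMap ∘ₗ
  (LinearMap.llcomp k H (H →ₗ[k] (M →ₗ[k] B)) (M →ₗ[k] (H →ₗ[k] B)) (LinearMap.lflip : (H →ₗ[k] (M →ₗ[k] B)) ≃ₗ[k] (M →ₗ[k] (H →ₗ[k] B))).toLinearMap) ∘ₗ
  (TensorProduct.lcurry (RingHom.id k) H H (M →ₗ[k] B)) ∘ₗ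
  (LinearMap.lcomp k (M →ₗ[k] B) (LinearMap.mul' k H))

@[simp] lemma DmapAux_tmul (Φ : H →ₗ[k] (M →ₗ[k] B)) (m₀ : M) (h₁ h : H) :
    DmapAux Φ (m₀ ⊗ₜ[k] h₁) h = Φ (h₁ * h) m₀ := rfl

lemma diagContra_apply (ρ : M →ₗ[k] M ⊗[k] H) (θB : (H →ₗ[k] B) →ₗ[k] B)
    (Φ : H →ₗ[k] (M →ₗ[k] B)) (m : M) :
    diagContra k H ρ θB Φ m = θB (DmapAux Φ (ρ m)) := rfl

variable (ρ : M →ₗ[k] M ⊗[k] H) (Φ : H →ₗ[k] (H →ₗ[k] (M →ₗ[k] B)))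

/-- `QmapAux ρ Φ g m₀ = DmapAux (Φ g) (ρ m₀)`. -/
def QmapAux : H →ₗ[k] (M →ₗ[k] (H →ₗ[k] B)) :=
  (LinearMap.lcomp k (H →ₗ[k] B) ρ) ∘ₗ DmapAux ∘ₗ Φ

@[simp] lemma QmapAux_apply (g : H) (m₀ : M) :
    QmapAux ρ Φ g m₀ = DmapAux (Φ g) (ρ m₀) := rfl

/-- `GbigAux Φ ((u ⊗ v) ⊗ (p ⊗ q)) = Φ (v q) (u p)`. -/
def GbigAux : ((H ⊗[k] H) ⊗[k] (H ⊗[k] H)) →ₗ[k] (M →ₗ[k] B) :=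
  (TensorProduct.lift Φ.flip) ∘ₗ
  (TensorProduct.map (LinearMap.mul' k H) (LinearMap.mul' k H)) ∘ₗ
  (TensorProduct.tensorTensorTensorComm k H H H H).toLinearMap

@[simp] lemma GbigAux_tmul (u v p q : H) :
    GbigAux Φ ((u ⊗ₜ[k] v) ⊗ₜ[k] (p ⊗ₜ[k] q)) = Φ (v * q) (u * p) := by
  simp [GbigAux]

/-- `GmapAux Φ (m₀ ⊗ w) h = GbigAux Φ (w ⊗ comul h) m₀`. -/
def GmapAux : (M ⊗[k] (H ⊗[k] H)) →ₗ[k] (H →ₗ[k] B) :=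
  TensorProduct.lift (((LinearMap.lflip : (H →ₗ[k] (M →ₗ[k] B)) ≃ₗ[k] (M →ₗ[k] (H →ₗ[k] B))).toLinearMap ∘ₗ
    ((LinearMap.lcomp k (M →ₗ[k] B) (Coalgebra.comul (R := k) (A := H))) ∘ₗ
      TensorProduct.curry (GbigAux Φ))).flip)

@[simp] lemma GmapAux_tmul (m₀ : M) (w : H ⊗[k] H) (h : H) :
    GmapAux Φ (m₀ ⊗ₜ[k] w) h = GbigAux Φ (w ⊗ₜ[k] (Coalgebra.comul h)) m₀ := rfl

/-- `P Ψ = lift Ψ.flip ∘ₗ comul`. -/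
def PmapAux : (H →ₗ[k] (H →ₗ[k] B)) →ₗ[k] (H →ₗ[k] B) :=
  (LinearMap.lcomp k B (Coalgebra.comul (R := k) (A := H))) ∘ₗ
  (TensorProduct.lift.equiv (RingHom.id k) H H B).toLinearMap ∘ₗ (LinearMap.lflip : (H →ₗ[k] (H →ₗ[k] B)) ≃ₗ[k] (H →ₗ[k] (H →ₗ[k] B))).toLinearMap

lemma PmapAux_apply (Ψ : H →ₗ[k] (H →ₗ[k] B)) :
    PmapAux Ψ = (TensorProduct.lift Ψ.flip) ∘ₗ Coalgebra.comul := by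
  have h1 : (TensorProduct.lift.equiv (RingHom.id k) H H B) ((LinearMap.lflip : (H →ₗ[k] (H →ₗ[k] B)) ≃ₗ[k] (H →ₗ[k] (H →ₗ[k] B))) Ψ) = TensorProduct.lift Ψ.flip :=
    TensorProduct.ext' fun a b => by simp
  ext h
  simp [PmapAux, h1]
  have h2 : (TensorProduct.lift.equiv (RingHom.id k) H H B) Ψ.flip = TensorProduct.lift Ψ.flip := by
    simpa using h1
  rw [h2]

/-- `VfamAux ρ Φ h₁ y = PmapAux (h ↦ DmapAux (Φ (h₁ h)) y)`. -/
def VfamAux : H →ₗ[k] ((M ⊗[k] H) →ₗ[k] (H →ₗ[k] B)) :=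
  (LinearMap.llcomp k (M ⊗[k] H) (H →ₗ[k] (H →ₗ[k] B)) (H →ₗ[k] B) PmapAux) ∘ₗ
  (LinearMap.lflip : (H →ₗ[k] ((M ⊗[k] H) →ₗ[k] (H →ₗ[k] B))) ≃ₗ[k] ((M ⊗[k] H) →ₗ[k] (H →ₗ[k] (H →ₗ[k] B)))).toLinearMap ∘ₗ
  (LinearMap.llcomp k H H (M ⊗[k] H →ₗ[k] (H →ₗ[k] B)) (DmapAux ∘ₗ Φ)) ∘ₗ
  (LinearMap.mul k H)

def LamAux : ((M ⊗[k] H) ⊗[k] H) →ₗ[k] (H →ₗ[k] B) :=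
  TensorProduct.lift (VfamAux Φ).flip

@[simp] lemma LamAux_tmul (y : M ⊗[k] H) (h₁ : H) :
    LamAux Φ (y ⊗ₜ[k] h₁) = PmapAux ((LinearMap.applyₗ (R := k) y) ∘ₗ (DmapAux ∘ₗ Φ) ∘ₗ (LinearMap.mul k H h₁)) := by
  simp [LamAux, VfamAux]
  rfl

/-- `CmapAux b = (h ↦ ε h • b)`, bundled linearly in `b`. -/
def CmapAux : B →ₗ[k] (H →ₗ[k] B) where
  toFun b := (LinearMap.toSpanSingleton k B b) ∘ₗ Coalgebra.counit
  map_add' b b' := by ext h; simp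
  map_smul' c b := by
    ext h
    simp only [LinearMap.comp_apply, LinearMap.toSpanSingleton_apply, RingHom.id_apply,
      LinearMap.smul_apply]
    rw [smul_comm]

lemma CmapAux_apply (b : B) :
    CmapAux (H := H) b = (LinearMap.toSpanSingleton k B b) ∘ₗ Coalgebra.counit := rfl

@[simp] lemma CmapAux_apply₂ (b : B) (h : H) :
    CmapAux (k := k) (H := H) b h = Coalgebra.counit (R := k) h • b := rfl

end Aux

theorem diagContra_isContramodule
    (k : Type*) [Field k]
    (H : Type*) [Semiring H] [HopfAlgebra k H]
    (M : Type*) [AddCommGroup M] [Module k M]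
    (B : Type*) [AddCommGroup B] [Module k B]
    (ρ : M →ₗ[k] M ⊗[k] H) (hM : IsComodule k H ρ)
    (θB : (H →ₗ[k] B) →ₗ[k] B) (hB : IsContramodule k H θB) :
    IsContramodule k H (diagContra k H ρ θB) := by
  constructor
  · -- contra-associativity
    intro Φ
    ext m
    -- Claim A
    have claimA : DmapAux (diagContra k H ρ θB ∘ₗ Φ)
        = (LinearMap.llcomp k H (H →ₗ[k] B) B θB) ∘ₗ DmapAux (QmapAux ρ Φ) := by
      apply TensorProduct.ext'
      intro m₀ h₁
      ext h
      simp only [LinearMap.comp_apply, DmapAux_tmul, LinearMap.llcomp_apply,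
        QmapAux_apply, diagContra_apply]
    -- Claim B0
    have claimB0 : PmapAux ∘ₗ DmapAux (QmapAux ρ Φ)
        = LamAux Φ ∘ₗ (TensorProduct.map ρ LinearMap.id) := by
      apply TensorProduct.ext'
      intro m₀ h₁
      simp only [LinearMap.comp_apply, TensorProduct.map_tmul, LinearMap.id_coe, id_eq,
        LamAux_tmul]
      congr 1

    -- Claim B'
    have claimB' : LamAux Φ = GmapAux Φ ∘ₗ (TensorProduct.assoc k M H H).toLinearMap := by
      apply TensorProduct.ext_threefold
      intro a b h₁
      rw [LamAux_tmul, PmapAux_apply]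
      have key : TensorProduct.lift ((LinearMap.applyₗ (R := k) (a ⊗ₜ[k] b) ∘ₗ
            (DmapAux ∘ₗ Φ) ∘ₗ (LinearMap.mul k H h₁)).flip)
          = (LinearMap.applyₗ (R := k) a) ∘ₗ ((TensorProduct.curry (GbigAux Φ)) (b ⊗ₜ[k] h₁)) :=
        TensorProduct.ext' fun p q => by simp [LinearMap.mul_apply']
      ext h
      simp [key]
    -- Claim D
    have claimD : (TensorProduct.lift Φ.flip) ∘ₗ (LinearMap.mul' k (H ⊗[k] H)) = GbigAux Φ := by
      apply TensorProduct.ext_fourfold'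
      intro w x y z
      simp [Algebra.TensorProduct.tmul_mul_tmul]
    -- Claim C
    have claimC : DmapAux (TensorProduct.lift Φ.flip ∘ₗ Coalgebra.comul)
        = GmapAux Φ ∘ₗ TensorProduct.map LinearMap.id Coalgebra.comul := by
      apply TensorProduct.ext'
      intro m₀ h₁
      ext h
      have e := LinearMap.congr_fun claimD
        ((Coalgebra.comul (R := k) h₁) ⊗ₜ[k] (Coalgebra.comul (R := k) h))
      simp only [LinearMap.comp_apply, LinearMap.mul'_apply] at e
      simp [e]
    -- the chain
    have coassoc := LinearMap.congr_fun hM.1 m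
    simp only [LinearMap.comp_apply] at coassoc
    calc diagContra k H ρ θB (diagContra k H ρ θB ∘ₗ Φ) m
        = θB (DmapAux (diagContra k H ρ θB ∘ₗ Φ) (ρ m)) := rfl
      _ = θB (θB ∘ₗ (DmapAux (QmapAux ρ Φ) (ρ m))) := by rw [claimA]; rfl
      _ = θB ((TensorProduct.lift (DmapAux (QmapAux ρ Φ) (ρ m)).flip) ∘ₗ Coalgebra.comul) :=
          hB.1 (DmapAux (QmapAux ρ Φ) (ρ m))
      _ = θB (PmapAux (DmapAux (QmapAux ρ Φ) (ρ m))) := by rw [PmapAux_apply]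
      _ = θB (LamAux Φ ((TensorProduct.map ρ LinearMap.id) (ρ m))) := by
          have e2 := LinearMap.congr_fun claimB0 (ρ m)
          simp only [LinearMap.comp_apply] at e2
          rw [e2]
      _ = θB (GmapAux Φ ((TensorProduct.assoc k M H H).toLinearMap
              ((TensorProduct.map ρ LinearMap.id) (ρ m)))) := by rw [claimB']; rfl
      _ = θB (GmapAux Φ ((TensorProduct.map LinearMap.id Coalgebra.comul) (ρ m))) := by
          rw [coassoc]
      _ = θB (DmapAux (TensorProduct.lift Φ.flip ∘ₗ Coalgebra.comul) (ρ m)) := by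
          rw [claimC]; rfl
      _ = diagContra k H ρ θB ((TensorProduct.lift Φ.flip) ∘ₗ Coalgebra.comul) m := rfl
  · -- contra-unity
    intro f
    ext m
    have hkey : DmapAux ((LinearMap.toSpanSingleton k (M →ₗ[k] B) f) ∘ₗ Coalgebra.counit)
        = (CmapAux (k := k) (H := H) (B := B)) ∘ₗ f ∘ₗ ((TensorProduct.rid k M).toLinearMap ∘ₗ
            TensorProduct.map LinearMap.id Coalgebra.counit) := by
      apply TensorProduct.ext'
      intro m₀ h₁
      ext h
      simp only [LinearMap.comp_apply, DmapAux_tmul, TensorProduct.map_tmul,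
        LinearMap.id_coe, id_eq, LinearEquiv.coe_coe, TensorProduct.rid_tmul,
        LinearMap.toSpanSingleton_apply, LinearMap.smul_apply, map_smul,
        CmapAux_apply₂, Bialgebra.counit_mul, mul_smul]
    have hcu := LinearMap.congr_fun hM.2 m
    simp only [LinearMap.comp_apply, LinearMap.id_apply] at hcu
    calc diagContra k H ρ θB ((LinearMap.toSpanSingleton k (M →ₗ[k] B) f) ∘ₗ Coalgebra.counit) m
        = θB (DmapAux ((LinearMap.toSpanSingleton k (M →ₗ[k] B) f) ∘ₗ Coalgebra.counit) (ρ m)) :=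
          rfl
      _ = θB (CmapAux (f ((TensorProduct.rid k M).toLinearMap
              ((TensorProduct.map LinearMap.id Coalgebra.counit) (ρ m))))) := by
          rw [hkey]; rfl
      _ = f ((TensorProduct.rid k M).toLinearMap
              ((TensorProduct.map LinearMap.id Coalgebra.counit) (ρ m))) :=
          hB.2 _
      _ = f m := by rw [hcu]

end
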